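/- Let μ be a finite positive Borel measure on ℂ with μ({z ∈ ℂ : |z| > 1}) = 0. Assume: (a) there exists C > 0 such that μ(Δ) ≤ C·σ(Δ) for every Borel set Δ ⊆ 𝕋; and (b) there exist ε ∈ (0,1) and C' > 0 such that μ(Δ) ≤ C'·λ₂(Δ) for every Borel set Δ contained in the annulus {z ∈ ℂ : 1 − ε < |z| < 1}, where λ₂ is two-dimensional Lebesgue measure on ℂ ≅ ℝ². Then the sequence of monomials (e_k)_{k∈ℕ} is a Bessel sequence in L²(μ). -/

import Mathlib

open MeasureTheory

/-- The monomials `(z^k)_{k∈ℕ}` form a Bessel sequence in `L²(μ)` with bound `C`: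
`∑_k |⟨g, e_k⟩_{L²(μ)}|² ≤ C‖g‖²_{L²(μ)}` for every `g ∈ L²(μ)`
(stated via finite partial sums). -/
def MonomialsBesselWith (μ : Measure ℂ) (C : ℝ) : Prop :=
  ∀ g : ℂ → ℂ, MemLp g 2 μ → ∀ F : Finset ℕ,
    ∑ k ∈ F, ‖∫ z, g z * (starRingEnd ℂ) (z ^ k) ∂μ‖ ^ 2 ≤ C * ∫ z, ‖g z‖ ^ 2 ∂μ

/-- The normalized arc length measure on the unit circle `𝕋 ⊆ ℂ`, i.e. the pushforward of
Lebesgue measure on `[0,1)` under `t ↦ exp(2πit)`; it is a probability measure on `𝕋`. -/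
noncomputable def arcMeasure : Measure ℂ :=
  Measure.map (fun t : ℝ => Complex.exp (2 * Real.pi * Complex.I * t))
    (volume.restrict (Set.Ico (0 : ℝ) 1))

section Aux

open Set Complex
open scoped Real

-- elementary exponential integral over a period
lemma exp_period_integral (c : ℂ) (n : ℤ) (a b : ℝ) (hc : c ≠ 0)
    (hab : c * b = c * a + n * (2 * Real.pi * I)) :
    ∫ t in a..b, Complex.exp (c * t) = 0 := by
  rw [integral_exp_mul_complex hc, hab, Complex.exp_add]
  rw [show (n : ℂ) * (2 * Real.pi * I) = n * (2 * Real.pi * I) by ring,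
    Complex.exp_int_mul_two_pi_mul_I, mul_one, sub_self, zero_div]

-- orthogonality for arcMeasure parametrization
lemma ortho_t (j k : ℕ) :
    ∫ t in (0:ℝ)..1, (Complex.exp (2*Real.pi*I*t))^j * (starRingEnd ℂ) ((Complex.exp (2*Real.pi*I*t))^k)
      = if j = k then 1 else 0 := by
  have key : ∀ t : ℝ, (Complex.exp (2*Real.pi*I*t))^j * (starRingEnd ℂ) ((Complex.exp (2*Real.pi*I*t))^k)
      = Complex.exp ((((j:ℂ) - k) * (2*Real.pi*I)) * t) := by
    intro t
    rw [← Complex.exp_nat_mul, ← Complex.exp_nat_mul, ← Complex.exp_conj, ← Complex.exp_add]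
    congr 1
    have : (starRingEnd ℂ) ((k:ℂ) * (2*Real.pi*I*t)) = -((k:ℂ) * (2*Real.pi*I*t)) := by
      simp only [map_mul, Complex.conj_I, Complex.conj_ofReal, map_ofNat, map_natCast]
      ring
    rw [this]; push_cast; ring
  simp_rw [key]
  by_cases h : j = k
  · subst h; simp
  · rw [if_neg h]
    apply exp_period_integral _ ((j:ℤ) - k)
    · simp only [ne_eq, mul_eq_zero, sub_eq_zero]
      push_neg
      refine ⟨fun hh => h (by exact_mod_cast hh), ?_⟩
      simp [Real.pi_ne_zero, Complex.I_ne_zero]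
    · push_cast; ring

-- orthogonality at radius r
lemma ortho_r (j k : ℕ) (r : ℝ) (hr : 0 ≤ r) :
    ∫ θ in (-Real.pi)..Real.pi,
        ((r:ℂ) * Complex.exp (θ * I))^j * (starRingEnd ℂ) (((r:ℂ) * Complex.exp (θ * I))^k)
      = if j = k then 2*Real.pi*(r:ℂ)^(j+k) else 0 := by
  have key : ∀ θ : ℝ, ((r:ℂ) * Complex.exp (θ * I))^j * (starRingEnd ℂ) (((r:ℂ) * Complex.exp (θ * I))^k)
      = (r:ℂ)^(j+k) * Complex.exp ((((j:ℂ) - k) * I) * θ) := by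
    intro θ
    rw [mul_pow, mul_pow, map_mul, ← Complex.exp_nat_mul, ← Complex.exp_nat_mul,
      ← Complex.exp_conj]
    have hc : (starRingEnd ℂ) (((r:ℂ))^k) = ((r:ℂ))^k := by
      rw [map_pow, Complex.conj_ofReal]
    rw [hc]
    have h2 : (starRingEnd ℂ) ((k:ℂ) * ((θ:ℂ) * I)) = -((k:ℂ) * ((θ:ℂ) * I)) := by
      simp only [map_mul, Complex.conj_I, Complex.conj_ofReal, map_natCast]
      ring
    rw [h2, mul_mul_mul_comm, ← Complex.exp_add, pow_add]
    congr 1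
    ring
  simp_rw [key]
  rw [intervalIntegral.integral_const_mul]
  by_cases h : j = k
  · subst h
    rw [if_pos rfl]
    simp only [sub_self, zero_mul, Complex.exp_zero]
    rw [intervalIntegral.integral_const, Complex.real_smul]
    push_cast
    ring
  · rw [if_neg h]
    rw [exp_period_integral _ ((j:ℤ) - k), mul_zero]
    · simp only [ne_eq, mul_eq_zero, sub_eq_zero]
      push_neg
      exact ⟨fun hh => h (by exact_mod_cast hh), Complex.I_ne_zero⟩
    · push_cast; ring

-- generic expansion of a squared norm integral of a "polynomial along a curve"
lemma expand_integral (ν : Measure ℝ) (w : ℝ → ℂ) (F : Finset ℕ) (c : ℕ → ℂ)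
    (hint : ∀ j k : ℕ, Integrable (fun t => (w t)^j * (starRingEnd ℂ) ((w t)^k)) ν)
    (hmeas : AEStronglyMeasurable (fun t => ‖∑ k ∈ F, c k * (w t)^k‖^2) ν) :
    ∫ t, ‖∑ k ∈ F, c k * (w t)^k‖^2 ∂ν
      = (∑ j ∈ F, ∑ k ∈ F, (c j * (starRingEnd ℂ) (c k)) *
          ∫ t, (w t)^j * (starRingEnd ℂ) ((w t)^k) ∂ν).re := by
  set Q : ℝ → ℂ := fun t => ∑ k ∈ F, c k * (w t)^k with hQ
  have expand : ∀ t, Q t * (starRingEnd ℂ) (Q t)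
      = ∑ j ∈ F, ∑ k ∈ F, (c j * (starRingEnd ℂ) (c k)) * ((w t)^j * (starRingEnd ℂ) ((w t)^k)) := by
    intro t
    rw [hQ]
    simp only [map_sum, map_mul, Finset.sum_mul_sum]
    refine Finset.sum_congr rfl fun j _ => Finset.sum_congr rfl fun k _ => ?_
    ring
  have hQQint : Integrable (fun t => Q t * (starRingEnd ℂ) (Q t)) ν := by
    simp_rw [expand]
    exact integrable_finset_sum _ fun j _ => integrable_finset_sum _ fun k _ =>
      ((hint j k).const_mul _)
  have hsq : ∀ t, ‖Q t‖^2 = (Q t * (starRingEnd ℂ) (Q t)).re := by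
    intro t
    rw [Complex.mul_conj, Complex.ofReal_re, Complex.sq_norm]
  calc ∫ t, ‖Q t‖^2 ∂ν = ∫ t, (Q t * (starRingEnd ℂ) (Q t)).re ∂ν := by simp_rw [hsq]
    _ = (∫ t, Q t * (starRingEnd ℂ) (Q t) ∂ν).re := by
        have := Complex.reCLM.integral_comp_comm hQQint
        simpa using this
    _ = _ := by
        congr 1
        simp_rw [expand]
        rw [integral_finset_sum _ (fun j _ => integrable_finset_sum _ fun k _ =>
          ((hint j k).const_mul _))]
        refine Finset.sum_congr rfl fun j _ => ?_
        rw [integral_finset_sum _ (fun k _ => ((hint j k).const_mul _))]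
        exact Finset.sum_congr rfl fun k _ => integral_const_mul _ _

lemma collapse (F : Finset ℕ) (c : ℕ → ℂ) (v : ℕ → ℂ) :
    (∑ j ∈ F, ∑ k ∈ F, (c j * (starRingEnd ℂ) (c k)) * (if j = k then v j else 0)).re
      = ∑ k ∈ F, ‖c k‖^2 * (v k).re := by
  rw [Complex.re_sum]
  refine Finset.sum_congr rfl fun j hj => ?_
  have : ∀ k ∈ F, (c j * (starRingEnd ℂ) (c k)) * (if j = k then v j else 0)
      = if j = k then (c j * (starRingEnd ℂ) (c k)) * v j else 0 := by
    intro k _; split <;> simp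
  rw [Finset.sum_congr rfl this, Finset.sum_ite_eq F j (fun k => (c j * (starRingEnd ℂ) (c k)) * v j),
    if_pos hj, Complex.mul_conj, Complex.re_ofReal_mul, Complex.sq_norm]

lemma wcont : Continuous fun t : ℝ => Complex.exp (2 * Real.pi * Complex.I * t) :=
  Complex.continuous_exp.comp (continuous_const.mul Complex.continuous_ofReal)

lemma circle_norm (c : ℕ → ℂ) (F : Finset ℕ) :
    ∫ z, ‖∑ k ∈ F, c k * z^k‖^2 ∂arcMeasure = ∑ k ∈ F, ‖c k‖^2 := by
  have hPc : Continuous fun z : ℂ => ‖∑ k ∈ F, c k * z^k‖^2 := by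
    apply Continuous.pow
    apply Continuous.norm
    exact continuous_finset_sum _ fun k _ => continuous_const.mul (continuous_pow k)
  rw [arcMeasure, integral_map wcont.aemeasurable hPc.aestronglyMeasurable]
  have hint : ∀ j k : ℕ, Integrable
      (fun t : ℝ => (Complex.exp (2*Real.pi*Complex.I*t))^j *
        (starRingEnd ℂ) ((Complex.exp (2*Real.pi*Complex.I*t))^k))
      (volume.restrict (Set.Ico (0:ℝ) 1)) := by
    intro j k
    have hc : Continuous fun t : ℝ => (Complex.exp (2*Real.pi*Complex.I*t))^j *
        (starRingEnd ℂ) ((Complex.exp (2*Real.pi*Complex.I*t))^k) :=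
      (wcont.pow j).mul (Complex.continuous_conj.comp (wcont.pow k))
    exact (hc.integrableOn_Icc (a := (0:ℝ)) (b := (1:ℝ))).mono_set Set.Ico_subset_Icc_self
  rw [expand_integral _ _ F c hint (hPc.comp wcont).aestronglyMeasurable]
  have horth : ∀ j ∈ F, ∀ k ∈ F,
      (∫ t in Set.Ico (0:ℝ) 1, (Complex.exp (2*Real.pi*Complex.I*t))^j *
        (starRingEnd ℂ) ((Complex.exp (2*Real.pi*Complex.I*t))^k))
      = if j = k then (1:ℂ) else 0 := by
    intro j _ k _
    rw [MeasureTheory.integral_Ico_eq_integral_Ioo, ← MeasureTheory.integral_Ioc_eq_integral_Ioo,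
      ← intervalIntegral.integral_of_le zero_le_one]
    exact ortho_t j k
  rw [Finset.sum_congr rfl fun j hj => Finset.sum_congr rfl fun k hk =>
    by rw [horth j hj k hk]]
  rw [collapse]
  simp

lemma radius_norm (c : ℕ → ℂ) (F : Finset ℕ) (r : ℝ) (hr0 : 0 ≤ r) (hr1 : r ≤ 1) :
    ∫ θ in Set.Ioo (-Real.pi) Real.pi, ‖∑ k ∈ F, c k * ((r:ℂ) * Complex.exp ((θ:ℂ) * Complex.I))^k‖^2
      ≤ 2*Real.pi * ∑ k ∈ F, ‖c k‖^2 := by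
  have hw : Continuous fun θ : ℝ => (r:ℂ) * Complex.exp ((θ:ℂ) * Complex.I) :=
    continuous_const.mul (Complex.continuous_exp.comp (Complex.continuous_ofReal.mul continuous_const))
  have hint : ∀ j k : ℕ, Integrable
      (fun θ : ℝ => ((r:ℂ) * Complex.exp ((θ:ℂ) * Complex.I))^j *
        (starRingEnd ℂ) (((r:ℂ) * Complex.exp ((θ:ℂ) * Complex.I))^k))
      (volume.restrict (Set.Ioo (-Real.pi) Real.pi)) := by
    intro j k
    have hc : Continuous fun θ : ℝ => ((r:ℂ) * Complex.exp ((θ:ℂ) * Complex.I))^j *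
        (starRingEnd ℂ) (((r:ℂ) * Complex.exp ((θ:ℂ) * Complex.I))^k) :=
      (hw.pow j).mul (Complex.continuous_conj.comp (hw.pow k))
    exact (hc.integrableOn_Icc (a := (-Real.pi)) (b := Real.pi)).mono_set Set.Ioo_subset_Icc_self
  have hPc : Continuous fun z : ℂ => ‖∑ k ∈ F, c k * z^k‖^2 := by
    apply Continuous.pow
    apply Continuous.norm
    exact continuous_finset_sum _ fun k _ => continuous_const.mul (continuous_pow k)
  rw [expand_integral _ _ F c hint (hPc.comp hw).aestronglyMeasurable]
  have horth : ∀ j ∈ F, ∀ k ∈ F,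
      (∫ θ in Set.Ioo (-Real.pi) Real.pi, ((r:ℂ) * Complex.exp ((θ:ℂ) * Complex.I))^j *
        (starRingEnd ℂ) (((r:ℂ) * Complex.exp ((θ:ℂ) * Complex.I))^k))
      = if j = k then (2*Real.pi*(r:ℂ)^(2*j) : ℂ) else 0 := by
    intro j _ k _
    rw [← MeasureTheory.integral_Ioc_eq_integral_Ioo,
      ← intervalIntegral.integral_of_le (neg_le_self Real.pi_pos.le), ortho_r j k r hr0]
    split_ifs with h
    · subst h; rw [two_mul]; ring
    · rfl
  rw [Finset.sum_congr rfl fun j hj => Finset.sum_congr rfl fun k hk =>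
    by rw [horth j hj k hk]]
  rw [collapse]
  have hterm : ∀ k ∈ F, ‖c k‖^2 * (2*Real.pi*(r:ℂ)^(2*k) : ℂ).re ≤ 2*Real.pi * ‖c k‖^2 := by
    intro k _
    have : (2*Real.pi*(r:ℂ)^(2*k) : ℂ) = ((2*Real.pi*r^(2*k) : ℝ) : ℂ) := by push_cast; ring
    rw [this, Complex.ofReal_re]
    have hrk : r^(2*k) ≤ 1 := pow_le_one₀ hr0 hr1
    calc ‖c k‖^2 * (2*Real.pi*r^(2*k)) = (2*Real.pi*‖c k‖^2) * r^(2*k) := by ring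
      _ ≤ (2*Real.pi*‖c k‖^2) * 1 := by
          refine mul_le_mul_of_nonneg_left hrk ?_
          positivity
      _ = 2*Real.pi*‖c k‖^2 := mul_one _
  calc ∑ k ∈ F, ‖c k‖^2 * (2*Real.pi*(r:ℂ)^(2*k) : ℂ).re
      ≤ ∑ k ∈ F, 2*Real.pi * ‖c k‖^2 := Finset.sum_le_sum hterm
    _ = 2*Real.pi * ∑ k ∈ F, ‖c k‖^2 := by rw [Finset.mul_sum]

lemma ball_norm (c : ℕ → ℂ) (F : Finset ℕ) :
    ∫ z in Metric.ball (0:ℂ) 1, ‖∑ k ∈ F, c k * z^k‖^2 ∂volume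
      ≤ 2*Real.pi * ∑ k ∈ F, ‖c k‖^2 := by
  set P : ℂ → ℝ := fun z => ‖∑ k ∈ F, c k * z^k‖^2 with hP
  have hPc : Continuous P := by
    apply Continuous.pow
    apply Continuous.norm
    exact continuous_finset_sum _ fun k _ => continuous_const.mul (continuous_pow k)
  have hPnn : ∀ z, 0 ≤ P z := fun z => sq_nonneg _
  have hS : (0:ℝ) ≤ ∑ k ∈ F, ‖c k‖^2 := Finset.sum_nonneg fun k _ => sq_nonneg _
  -- continuity of the polar parametrization
  have hsymm : (fun p : ℝ × ℝ => Complex.polarCoord.symm p)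
      = fun p : ℝ × ℝ => (p.1 : ℂ) * Complex.exp ((p.2 : ℂ) * Complex.I) := by
    funext p
    rw [Complex.polarCoord_symm_apply, Complex.exp_mul_I]
    simp [Complex.ofReal_cos, Complex.ofReal_sin]
  have hsymmc : Continuous fun p : ℝ × ℝ => Complex.polarCoord.symm p := by
    rw [hsymm]
    exact (Complex.continuous_ofReal.comp continuous_fst).mul
      (Complex.continuous_exp.comp ((Complex.continuous_ofReal.comp continuous_snd).mul
        continuous_const))
  have hcont : Continuous fun p : ℝ × ℝ => p.1 * P (Complex.polarCoord.symm p) :=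
    continuous_fst.mul (hPc.comp hsymmc)
  have hIntOn : IntegrableOn (fun p : ℝ × ℝ => p.1 * P (Complex.polarCoord.symm p))
      (Set.Ioo (0:ℝ) 1 ×ˢ Set.Ioo (-Real.pi) Real.pi) volume :=
    (hcont.continuousOn.integrableOn_compact (isCompact_Icc.prod isCompact_Icc)).mono_set
      (Set.prod_mono Set.Ioo_subset_Icc_self Set.Ioo_subset_Icc_self)
  -- pass to polar coordinates
  rw [← MeasureTheory.integral_indicator measurableSet_ball,
    ← Complex.integral_comp_polarCoord_symm (Set.indicator (Metric.ball (0:ℂ) 1) P)]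
  have hcong : ∀ p ∈ polarCoord.target,
      p.1 • Set.indicator (Metric.ball (0:ℂ) 1) P (Complex.polarCoord.symm p)
        = Set.indicator {q : ℝ × ℝ | q.1 < 1}
            (fun q : ℝ × ℝ => q.1 * P (Complex.polarCoord.symm q)) p := by
    intro p hp
    rw [polarCoord_target] at hp
    have hp1 : 0 < p.1 := hp.1
    have hmem : Complex.polarCoord.symm p ∈ Metric.ball (0:ℂ) 1 ↔ p.1 < 1 := by
      rw [Metric.mem_ball, dist_zero_right, Complex.norm_polarCoord_symm,
        abs_of_pos hp1]
    by_cases h : p.1 < 1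
    · rw [Set.indicator_of_mem (hmem.mpr h),
        Set.indicator_of_mem (show p ∈ {q : ℝ × ℝ | q.1 < 1} from h), smul_eq_mul]
    · rw [Set.indicator_of_notMem (fun hh => h (hmem.mp hh)),
        Set.indicator_of_notMem (show p ∉ {q : ℝ × ℝ | q.1 < 1} from h), smul_zero]
  rw [setIntegral_congr_fun polarCoord.open_target.measurableSet hcong,
    setIntegral_indicator (measurableSet_lt (measurable_fst) measurable_const)]
  have hset : polarCoord.target ∩ {q : ℝ × ℝ | q.1 < 1}
      = Set.Ioo (0:ℝ) 1 ×ˢ Set.Ioo (-Real.pi) Real.pi := by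
    rw [polarCoord_target]
    ext ⟨x, y⟩
    simp only [Set.mem_inter_iff, Set.mem_prod, Set.mem_Ioi, Set.mem_Ioo, Set.mem_setOf_eq]
    tauto
  rw [hset, Measure.volume_eq_prod] at *
  rw [setIntegral_prod _ hIntOn]
  -- bound the iterated integral
  have hIntOn' : Integrable (fun p : ℝ × ℝ => p.1 * P (Complex.polarCoord.symm p))
      ((volume.restrict (Set.Ioo (0:ℝ) 1)).prod (volume.restrict (Set.Ioo (-Real.pi) Real.pi))) := by
    rwa [Measure.prod_restrict]
  have houter : Integrable
      (fun x : ℝ => ∫ y in Set.Ioo (-Real.pi) Real.pi, x * P (Complex.polarCoord.symm (x, y)))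
      (volume.restrict (Set.Ioo (0:ℝ) 1)) := hIntOn'.integral_prod_left
  have hbound : ∀ x ∈ Set.Ioo (0:ℝ) 1,
      (∫ y in Set.Ioo (-Real.pi) Real.pi, x * P (Complex.polarCoord.symm (x, y)))
        ≤ 2*Real.pi * ∑ k ∈ F, ‖c k‖^2 := by
    intro x hx
    have hx0 : (0:ℝ) < x := hx.1
    have hx1 : x < 1 := hx.2
    have hrw : ∀ y : ℝ, P (Complex.polarCoord.symm (x, y))
        = ‖∑ k ∈ F, c k * ((x:ℂ) * Complex.exp ((y:ℂ) * Complex.I))^k‖^2 := by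
      intro y
      rw [hP]
      congr 1
      rw [congrFun hsymm (x, y)]
    simp_rw [hrw]
    rw [MeasureTheory.integral_const_mul]
    have h1 := radius_norm c F x hx0.le hx1.le
    have h2 : (0:ℝ) ≤ ∫ θ in Set.Ioo (-Real.pi) Real.pi,
        ‖∑ k ∈ F, c k * ((x:ℂ) * Complex.exp ((θ:ℂ) * Complex.I))^k‖^2 :=
      setIntegral_nonneg measurableSet_Ioo fun y _ => sq_nonneg _
    calc x * ∫ θ in Set.Ioo (-Real.pi) Real.pi,
          ‖∑ k ∈ F, c k * ((x:ℂ) * Complex.exp ((θ:ℂ) * Complex.I))^k‖^2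
        ≤ 1 * (2*Real.pi * ∑ k ∈ F, ‖c k‖^2) := by
          apply mul_le_mul hx1.le h1 h2 zero_le_one
      _ = 2*Real.pi * ∑ k ∈ F, ‖c k‖^2 := one_mul _
  calc (∫ x in Set.Ioo (0:ℝ) 1, ∫ y in Set.Ioo (-Real.pi) Real.pi,
          x * P (Complex.polarCoord.symm (x, y)))
      ≤ ∫ _x in Set.Ioo (0:ℝ) 1, 2*Real.pi * ∑ k ∈ F, ‖c k‖^2 := by
        refine setIntegral_mono_on houter ?_ measurableSet_Ioo hbound
        exact (integrableOn_const_iff).mpr (Or.inr (by simp [Real.volume_Ioo]))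
    _ = 2*Real.pi * ∑ k ∈ F, ‖c k‖^2 := by
        rw [setIntegral_const, Real.volume_real_Ioo]
        simp

lemma inner_pointwise (c : ℕ → ℂ) (F : Finset ℕ) (ρ : ℝ) (hρ0 : 0 ≤ ρ) (hρ1 : ρ < 1)
    (z : ℂ) (hz : ‖z‖ ≤ ρ) :
    ‖∑ k ∈ F, c k * z^k‖^2 ≤ (1 - ρ^2)⁻¹ * ∑ k ∈ F, ‖c k‖^2 := by
  have h1 : ‖∑ k ∈ F, c k * z^k‖ ≤ ∑ k ∈ F, ‖c k‖ * ρ^k := by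
    refine (norm_sum_le _ _).trans (Finset.sum_le_sum fun k _ => ?_)
    rw [norm_mul, norm_pow]
    refine mul_le_mul_of_nonneg_left ?_ (norm_nonneg _)
    exact pow_le_pow_left₀ (norm_nonneg _) hz k
  have h2 : (∑ k ∈ F, ‖c k‖ * ρ^k)^2 ≤ (∑ k ∈ F, ‖c k‖^2) * ∑ k ∈ F, (ρ^k)^2 :=
    Finset.sum_mul_sq_le_sq_mul_sq F _ _
  have h3 : ∑ k ∈ F, (ρ^k)^2 ≤ (1 - ρ^2)⁻¹ := by
    have : ∀ k : ℕ, (ρ^k)^2 = (ρ^2)^k := fun k => by rw [← pow_mul, ← pow_mul, mul_comm]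
    simp_rw [this]
    rw [← tsum_geometric_of_lt_one (by positivity) (by nlinarith)]
    exact Summable.sum_le_tsum F (fun k _ => by positivity)
      (summable_geometric_of_lt_one (by positivity) (by nlinarith))
  have h4 : ‖∑ k ∈ F, c k * z^k‖^2 ≤ (∑ k ∈ F, ‖c k‖ * ρ^k)^2 := by
    apply pow_le_pow_left₀ (norm_nonneg _) h1
  have hS : (0:ℝ) ≤ ∑ k ∈ F, ‖c k‖^2 := Finset.sum_nonneg fun k _ => sq_nonneg _
  calc ‖∑ k ∈ F, c k * z^k‖^2 ≤ (∑ k ∈ F, ‖c k‖^2) * ∑ k ∈ F, (ρ^k)^2 := h4.trans h2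
    _ ≤ (∑ k ∈ F, ‖c k‖^2) * (1 - ρ^2)⁻¹ := mul_le_mul_of_nonneg_left h3 hS
    _ = (1 - ρ^2)⁻¹ * ∑ k ∈ F, ‖c k‖^2 := mul_comm _ _

lemma synth_bound (μ : Measure ℂ) [IsFiniteMeasure μ]
    (hμ : μ {z : ℂ | 1 < ‖z‖} = 0)
    {C : ℝ} (hCpos : 0 < C)
    (hC : ∀ Δ : Set ℂ, MeasurableSet Δ → Δ ⊆ {z : ℂ | ‖z‖ = 1} →
        μ Δ ≤ ENNReal.ofReal C * arcMeasure Δ)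
    {ε : ℝ} (hε : ε ∈ Set.Ioo (0:ℝ) 1)
    {C' : ℝ} (hC'pos : 0 < C')
    (hC' : ∀ Δ : Set ℂ, MeasurableSet Δ →
        Δ ⊆ {z : ℂ | 1 - ε < ‖z‖ ∧ ‖z‖ < 1} →
        μ Δ ≤ ENNReal.ofReal C' * (volume : Measure ℂ) Δ)
    (c : ℕ → ℂ) (F : Finset ℕ) :
    ∫ z, ‖∑ k ∈ F, c k * z^k‖^2 ∂μ
      ≤ (C + C' * (2*Real.pi) + (1 - (1-ε)^2)⁻¹ * (μ Set.univ).toReal) * ∑ k ∈ F, ‖c k‖^2 := by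
  obtain ⟨hε0, hε1⟩ := hε
  set ρ : ℝ := 1 - ε with hρ
  have hρ0 : 0 ≤ ρ := by linarith
  have hρ1 : ρ < 1 := by linarith
  set Sig : ℝ := ∑ k ∈ F, ‖c k‖^2 with hSig
  have hSig0 : 0 ≤ Sig := Finset.sum_nonneg fun k _ => sq_nonneg _
  set P : ℂ → ℝ := fun z => ‖∑ k ∈ F, c k * z^k‖^2 with hP
  have hPc : Continuous P := by
    apply Continuous.pow
    apply Continuous.norm
    exact continuous_finset_sum _ fun k _ => continuous_const.mul (continuous_pow k)
  have hPnn : ∀ z, 0 ≤ P z := fun z => sq_nonneg _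
  set f : ℂ → ENNReal := fun z => ENNReal.ofReal (P z) with hf
  have hfm : Measurable f := ENNReal.measurable_ofReal.comp hPc.measurable
  have habs : Measurable fun z : ℂ => ‖z‖ := continuous_norm.measurable
  set S1 : Set ℂ := {z | ‖z‖ = 1} with hS1
  set S2 : Set ℂ := {z | 1 - ε < ‖z‖ ∧ ‖z‖ < 1} with hS2
  set S3 : Set ℂ := {z | ‖z‖ ≤ 1 - ε} with hS3
  set S4 : Set ℂ := {z | 1 < ‖z‖} with hS4
  have hm1 : MeasurableSet S1 := measurableSet_eq_fun habs measurable_const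
  have hm2 : MeasurableSet S2 :=
    (measurableSet_lt measurable_const habs).inter (measurableSet_lt habs measurable_const)
  have hm3 : MeasurableSet S3 := measurableSet_le habs measurable_const
  have hm4 : MeasurableSet S4 := measurableSet_lt measurable_const habs
  have hcover : ((S1 ∪ S2) ∪ S3) ∪ S4 = Set.univ := by
    ext z
    simp only [Set.mem_union, Set.mem_setOf_eq, Set.mem_univ, iff_true, hS1, hS2, hS3, hS4]
    rcases lt_trichotomy (‖z‖) 1 with h | h | h
    · rcases le_or_gt (‖z‖) (1 - ε) with h' | h'
      · exact Or.inl (Or.inr h')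
      · exact Or.inl (Or.inl (Or.inr ⟨h', h⟩))
    · exact Or.inl (Or.inl (Or.inl h))
    · exact Or.inr h
  have hd12 : Disjoint S1 S2 := by
    rw [Set.disjoint_left]
    intro z h1 h2
    rw [hS1, Set.mem_setOf_eq] at h1
    rw [hS2, Set.mem_setOf_eq] at h2
    linarith [h2.2]
  have hd123 : Disjoint (S1 ∪ S2) S3 := by
    rw [Set.disjoint_left]
    intro z h1 h3
    rw [hS3, Set.mem_setOf_eq] at h3
    rcases h1 with h1 | h2
    · rw [hS1, Set.mem_setOf_eq] at h1; linarith
    · rw [hS2, Set.mem_setOf_eq] at h2; linarith [h2.1]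
  have hd1234 : Disjoint ((S1 ∪ S2) ∪ S3) S4 := by
    rw [Set.disjoint_left]
    intro z h1 h4
    rw [hS4, Set.mem_setOf_eq] at h4
    rcases h1 with (h1 | h2) | h3
    · rw [hS1, Set.mem_setOf_eq] at h1; linarith
    · rw [hS2, Set.mem_setOf_eq] at h2; linarith [h2.2]
    · rw [hS3, Set.mem_setOf_eq] at h3; linarith
  -- split the lintegral
  have hsplit : ∫⁻ z, f z ∂μ
      = (∫⁻ z in S1, f z ∂μ) + (∫⁻ z in S2, f z ∂μ) + (∫⁻ z in S3, f z ∂μ)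
        + (∫⁻ z in S4, f z ∂μ) := by
    rw [← setLIntegral_univ, ← hcover, lintegral_union hm4 hd1234,
      lintegral_union hm3 hd123, lintegral_union hm2 hd12]
  -- bound on S4
  have hB4 : ∫⁻ z in S4, f z ∂μ = 0 := setLIntegral_measure_zero _ _ hμ
  -- bound on S1
  have harc_int : Integrable P arcMeasure := by
    rw [arcMeasure, integrable_map_measure hPc.aestronglyMeasurable wcont.aemeasurable]
    exact ((hPc.comp wcont).integrableOn_Icc (a := (0:ℝ)) (b := (1:ℝ))).mono_set
      Set.Ico_subset_Icc_self
  have harc : ∫⁻ z, f z ∂arcMeasure = ENNReal.ofReal Sig := by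
    rw [hf, ← ofReal_integral_eq_lintegral_ofReal harc_int (Filter.Eventually.of_forall hPnn)]
    rw [hP, circle_norm c F]
  have hB1 : ∫⁻ z in S1, f z ∂μ ≤ ENNReal.ofReal C * ENNReal.ofReal Sig := by
    have hle : μ.restrict S1 ≤ (ENNReal.ofReal C) • arcMeasure := by
      rw [Measure.le_iff]
      intro s hs
      rw [Measure.restrict_apply hs, Measure.smul_apply, smul_eq_mul]
      refine (hC _ (hs.inter hm1) Set.inter_subset_right).trans ?_
      exact mul_le_mul_right (measure_mono Set.inter_subset_left) _
    calc ∫⁻ z in S1, f z ∂μ ≤ ∫⁻ z, f z ∂((ENNReal.ofReal C) • arcMeasure) :=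
          lintegral_mono' hle le_rfl
      _ = ENNReal.ofReal C * ∫⁻ z, f z ∂arcMeasure := lintegral_smul_measure _ _
      _ = ENNReal.ofReal C * ENNReal.ofReal Sig := by rw [harc]
  -- bound on S2
  have hS2ball : S2 ⊆ Metric.ball (0:ℂ) 1 := by
    intro z hz
    rw [hS2, Set.mem_setOf_eq] at hz
    rw [Metric.mem_ball, dist_zero_right]
    exact hz.2
  have hball_int : IntegrableOn P (Metric.ball (0:ℂ) 1) volume :=
    (hPc.continuousOn.integrableOn_compact (isCompact_closedBall (0:ℂ) 1)).mono_set
      Metric.ball_subset_closedBall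
  have hvol : ∫⁻ z, f z ∂(volume.restrict S2) ≤ ENNReal.ofReal (2*Real.pi*Sig) := by
    have h1 : ∫⁻ z, f z ∂(volume.restrict S2) = ENNReal.ofReal (∫ z in S2, P z ∂volume) := by
      rw [hf, ← ofReal_integral_eq_lintegral_ofReal (hball_int.mono_set hS2ball)
        (Filter.Eventually.of_forall hPnn)]
    rw [h1]
    apply ENNReal.ofReal_le_ofReal
    calc ∫ z in S2, P z ∂volume ≤ ∫ z in Metric.ball (0:ℂ) 1, P z ∂volume := by
          apply setIntegral_mono_set hball_int (Filter.Eventually.of_forall hPnn)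
          exact HasSubset.Subset.eventuallyLE hS2ball
      _ ≤ 2*Real.pi*Sig := by rw [hP, hSig]; exact ball_norm c F
  have hB2 : ∫⁻ z in S2, f z ∂μ ≤ ENNReal.ofReal C' * ENNReal.ofReal (2*Real.pi*Sig) := by
    have hle : μ.restrict S2 ≤ (ENNReal.ofReal C') • (volume.restrict S2) := by
      rw [Measure.le_iff]
      intro s hs
      rw [Measure.restrict_apply hs, Measure.smul_apply, smul_eq_mul,
        Measure.restrict_apply hs]
      exact hC' _ (hs.inter hm2) Set.inter_subset_right
    calc ∫⁻ z in S2, f z ∂μ ≤ ∫⁻ z, f z ∂((ENNReal.ofReal C') • (volume.restrict S2)) :=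
          lintegral_mono' hle le_rfl
      _ = ENNReal.ofReal C' * ∫⁻ z, f z ∂(volume.restrict S2) := lintegral_smul_measure _ _
      _ ≤ ENNReal.ofReal C' * ENNReal.ofReal (2*Real.pi*Sig) := mul_le_mul_right hvol _
  -- bound on S3
  have hB3 : ∫⁻ z in S3, f z ∂μ ≤ ENNReal.ofReal ((1 - ρ^2)⁻¹ * Sig) * μ Set.univ := by
    have hpt : ∀ z ∈ S3, f z ≤ ENNReal.ofReal ((1 - ρ^2)⁻¹ * Sig) := by
      intro z hz
      rw [hS3, Set.mem_setOf_eq] at hz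
      exact ENNReal.ofReal_le_ofReal (inner_pointwise c F ρ hρ0 hρ1 z hz)
    calc ∫⁻ z in S3, f z ∂μ ≤ ∫⁻ _ in S3, ENNReal.ofReal ((1 - ρ^2)⁻¹ * Sig) ∂μ :=
          setLIntegral_mono measurable_const hpt
      _ = ENNReal.ofReal ((1 - ρ^2)⁻¹ * Sig) * μ S3 := setLIntegral_const _ _
      _ ≤ ENNReal.ofReal ((1 - ρ^2)⁻¹ * Sig) * μ Set.univ :=
          mul_le_mul_right (measure_mono (Set.subset_univ _)) _
  -- assemble
  have htotal : ∫⁻ z, f z ∂μ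
      ≤ ENNReal.ofReal ((C + C' * (2*Real.pi) + (1 - ρ^2)⁻¹ * (μ Set.univ).toReal) * Sig) := by
    rw [hsplit, hB4, add_zero]
    have hμfin : μ Set.univ ≠ ⊤ := measure_ne_top μ _
    have : ENNReal.ofReal ((C + C' * (2*Real.pi) + (1 - ρ^2)⁻¹ * (μ Set.univ).toReal) * Sig)
        = ENNReal.ofReal C * ENNReal.ofReal Sig
          + ENNReal.ofReal C' * ENNReal.ofReal (2*Real.pi*Sig)
          + ENNReal.ofReal ((1 - ρ^2)⁻¹ * Sig) * μ Set.univ := by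
      have hρ2 : (0:ℝ) ≤ (1 - ρ^2)⁻¹ := by
        have h' : (0:ℝ) < 1 - ρ^2 := by nlinarith
        positivity
      have hm : μ Set.univ = ENNReal.ofReal ((μ Set.univ).toReal) :=
        (ENNReal.ofReal_toReal hμfin).symm
      conv_rhs => rw [hm]
      rw [← ENNReal.ofReal_mul hCpos.le, ← ENNReal.ofReal_mul hC'pos.le,
        ← ENNReal.ofReal_mul (mul_nonneg hρ2 hSig0),
        ← ENNReal.ofReal_add (mul_nonneg hCpos.le hSig0) (by positivity),
        ← ENNReal.ofReal_add (by positivity) (by positivity)]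
      congr 1
      ring
    rw [this]
    exact add_le_add (add_le_add hB1 hB2) hB3
  -- back to the Bochner integral
  have hint_eq : ∫ z, P z ∂μ = (∫⁻ z, f z ∂μ).toReal := by
    rw [hf, integral_eq_lintegral_of_nonneg_ae (Filter.Eventually.of_forall hPnn)
      hPc.aestronglyMeasurable]
  rw [hP] at hint_eq
  rw [hint_eq]
  calc (∫⁻ z, f z ∂μ).toReal
      ≤ (ENNReal.ofReal ((C + C' * (2*Real.pi) + (1 - ρ^2)⁻¹ * (μ Set.univ).toReal) * Sig)).toReal :=
        ENNReal.toReal_mono ENNReal.ofReal_ne_top htotal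
    _ ≤ (C + C' * (2*Real.pi) + (1 - ρ^2)⁻¹ * (μ Set.univ).toReal) * Sig := by
        rw [ENNReal.toReal_ofReal']
        exact max_le_iff.mpr ⟨le_refl _, by
          have hρ2 : (0:ℝ) ≤ (1 - ρ^2)⁻¹ := by
            have h' : (0:ℝ) < 1 - ρ^2 := by nlinarith
            positivity
          positivity⟩
    _ = (C + C' * (2*Real.pi) + (1 - (1-ε)^2)⁻¹ * (μ Set.univ).toReal) * Sig := by rw [hρ]

end Aux

open Set Complex in
open scoped Real in
theorem stmt_17 (μ : Measure ℂ) [IsFiniteMeasure μ]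
    (hμ : μ {z : ℂ | 1 < ‖z‖} = 0)
    (ha : ∃ C > 0, ∀ Δ : Set ℂ, MeasurableSet Δ → Δ ⊆ {z : ℂ | ‖z‖ = 1} →
        μ Δ ≤ ENNReal.ofReal C * arcMeasure Δ)
    (hb : ∃ ε ∈ Set.Ioo (0 : ℝ) 1, ∃ C' > 0, ∀ Δ : Set ℂ, MeasurableSet Δ →
        Δ ⊆ {z : ℂ | 1 - ε < ‖z‖ ∧ ‖z‖ < 1} →
        μ Δ ≤ ENNReal.ofReal C' * (volume : Measure ℂ) Δ) :
    ∃ C > 0, MonomialsBesselWith μ C := by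
  simp only [MonomialsBesselWith]
  obtain ⟨C, hCpos, hC⟩ := ha
  obtain ⟨ε, hε, C', hC'pos, hC'⟩ := hb
  have hgap : (0:ℝ) < 1 - (1-ε)^2 := by
    have h1 := hε.1; have h2 := hε.2; nlinarith
  set K : ℝ := C + C' * (2*Real.pi) + (1 - (1-ε)^2)⁻¹ * (μ Set.univ).toReal with hK
  have hKpos : 0 < K := by
    have h3 : (0:ℝ) ≤ (1 - (1-ε)^2)⁻¹ * (μ Set.univ).toReal :=
      mul_nonneg (inv_nonneg.mpr hgap.le) ENNReal.toReal_nonneg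
    have h4 : 0 < C' * (2*Real.pi) := by positivity
    rw [hK]
    linarith
  refine ⟨K, hKpos, ?_⟩
  intro g hg F
  -- the Fourier coefficients
  set a : ℕ → ℂ := fun k => ∫ z, g z * (starRingEnd ℂ) (z ^ k) ∂μ with ha'
  set Sig : ℝ := ∑ k ∈ F, ‖a k‖^2 with hSig
  have hSig0 : 0 ≤ Sig := Finset.sum_nonneg fun k _ => sq_nonneg _
  set u : ℝ := ∫ z, ‖g z‖^2 ∂μ with hu
  have hu0 : 0 ≤ u := integral_nonneg fun z => sq_nonneg _
  show Sig ≤ K * u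
  have hae : ∀ᵐ z ∂μ, ‖z‖ ≤ 1 := by
    rw [ae_iff]
    simpa [not_le] using hμ
  have hg1 : Integrable g μ := hg.integrable one_le_two
  have hIntk : ∀ k : ℕ, Integrable (fun z => g z * (starRingEnd ℂ) (z ^ k)) μ := by
    intro k
    have h1 : Integrable (fun z => (starRingEnd ℂ) (z ^ k) * g z) μ := by
      refine hg1.bdd_mul (c := 1)
        ((Complex.continuous_conj.comp (continuous_pow k)).aestronglyMeasurable) ?_
      filter_upwards [hae] with z hz
      rw [RCLike.norm_conj, norm_pow]
      exact pow_le_one₀ (norm_nonneg z) hz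
    have heq : (fun z => g z * (starRingEnd ℂ) (z ^ k))
        = fun z => (starRingEnd ℂ) (z ^ k) * g z := funext fun z => mul_comm _ _
    rw [heq]; exact h1
  -- the dual polynomial
  set p : ℂ → ℂ := fun z => ∑ k ∈ F, a k * z^k with hp
  have hpc : Continuous p :=
    continuous_finset_sum _ fun k _ => continuous_const.mul (continuous_pow k)
  have hSig_eq : Sig = (∫ z, g z * (starRingEnd ℂ) (p z) ∂μ).re := by
    have hexp : ∀ z : ℂ, g z * (starRingEnd ℂ) (p z)
        = ∑ k ∈ F, (starRingEnd ℂ) (a k) * (g z * (starRingEnd ℂ) (z^k)) := by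
      intro z
      rw [hp, map_sum, Finset.mul_sum]
      refine Finset.sum_congr rfl fun k _ => ?_
      rw [map_mul]
      ring
    simp_rw [hexp]
    rw [integral_finset_sum _ (fun k _ => (hIntk k).const_mul _)]
    rw [Complex.re_sum, hSig]
    refine Finset.sum_congr rfl fun k _ => ?_
    rw [MeasureTheory.integral_const_mul]
    have hak : (∫ z, g z * (starRingEnd ℂ) (z ^ k) ∂μ) = a k := rfl
    rw [hak, mul_comm, Complex.mul_conj, Complex.ofReal_re, Complex.sq_norm]
  -- bound ‖p‖ pointwise a.e.
  have hpbd : ∀ᵐ z ∂μ, ‖p z‖ ≤ ∑ k ∈ F, ‖a k‖ := by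
    filter_upwards [hae] with z hz
    refine (norm_sum_le _ _).trans (Finset.sum_le_sum fun k _ => ?_)
    rw [norm_mul, norm_pow]
    calc ‖a k‖ * ‖z‖ ^ k ≤ ‖a k‖ * 1 :=
          mul_le_mul_of_nonneg_left (pow_le_one₀ (norm_nonneg z) hz) (norm_nonneg _)
      _ = ‖a k‖ := mul_one _
  have hp2 : MemLp p 2 μ := MemLp.of_bound hpc.aestronglyMeasurable _ hpbd
  -- Cauchy–Schwarz
  have hgp_int : Integrable (fun z => g z * (starRingEnd ℂ) (p z)) μ := by
    have h1 : Integrable (fun z => (starRingEnd ℂ) (p z) * g z) μ := by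
      refine hg1.bdd_mul (c := ∑ k ∈ F, ‖a k‖)
        ((Complex.continuous_conj.comp hpc).aestronglyMeasurable) ?_
      filter_upwards [hpbd] with z hz
      rwa [RCLike.norm_conj]
    have heq : (fun z => g z * (starRingEnd ℂ) (p z))
        = fun z => (starRingEnd ℂ) (p z) * g z := funext fun z => mul_comm _ _
    rw [heq]; exact h1
  set v : ℝ := ∫ z, ‖p z‖^2 ∂μ with hv
  have hv0 : 0 ≤ v := integral_nonneg fun z => sq_nonneg _
  have hCS : Sig ≤ u ^ (1/2:ℝ) * v ^ (1/2:ℝ) := by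
    rw [hSig_eq]
    calc (∫ z, g z * (starRingEnd ℂ) (p z) ∂μ).re
        ≤ ‖∫ z, g z * (starRingEnd ℂ) (p z) ∂μ‖ := Complex.re_le_norm _
      _ ≤ ∫ z, ‖g z * (starRingEnd ℂ) (p z)‖ ∂μ := norm_integral_le_integral_norm _
      _ = ∫ z, ‖g z‖ * ‖p z‖ ∂μ := by
          congr 1; funext z; rw [norm_mul, RCLike.norm_conj]
      _ ≤ (∫ z, ‖g z‖ ^ (2:ℝ) ∂μ) ^ (1/2:ℝ) * (∫ z, ‖p z‖ ^ (2:ℝ) ∂μ) ^ (1/2:ℝ) := by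
          refine integral_mul_le_Lp_mul_Lq_of_nonneg Real.HolderConjugate.two_two
            (Filter.Eventually.of_forall fun z => norm_nonneg _)
            (Filter.Eventually.of_forall fun z => norm_nonneg _) ?_ ?_
          · rw [show ENNReal.ofReal (2:ℝ) = 2 by
              rw [ENNReal.ofReal_ofNat]]
            exact hg.norm
          · rw [show ENNReal.ofReal (2:ℝ) = 2 by
              rw [ENNReal.ofReal_ofNat]]
            exact hp2.norm
      _ = u ^ (1/2:ℝ) * v ^ (1/2:ℝ) := by
          rw [hu, hv]
          norm_num [Real.rpow_natCast]
  have hvK : v ≤ K * Sig := by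
    rw [hv, hK, hSig, ha']
    exact synth_bound μ hμ hCpos hC hε hC'pos hC' a F
  -- conclude
  rcases eq_or_lt_of_le hSig0 with hS0 | hSpos
  · rw [← hS0]; positivity
  · have h1 : Sig ≤ u ^ (1/2:ℝ) * (K * Sig) ^ (1/2:ℝ) := by
      refine hCS.trans (mul_le_mul_of_nonneg_left ?_ (Real.rpow_nonneg hu0 _))
      exact Real.rpow_le_rpow hv0 hvK (by norm_num)
    have hsq : (u ^ (1/2:ℝ) * (K * Sig) ^ (1/2:ℝ))^2 = u * (K * Sig) := by
      rw [mul_pow, ← Real.rpow_natCast (u ^ (1/2:ℝ)) 2, ← Real.rpow_natCast ((K*Sig) ^ (1/2:ℝ)) 2,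
        ← Real.rpow_mul hu0, ← Real.rpow_mul (by positivity)]
      norm_num
    have h2 : Sig^2 ≤ u * (K * Sig) := by
      calc Sig^2 ≤ (u ^ (1/2:ℝ) * (K * Sig) ^ (1/2:ℝ))^2 := by
            apply pow_le_pow_left₀ hSig0 h1
        _ = u * (K * Sig) := hsq
    have h3 : Sig * Sig ≤ (K * u) * Sig := by nlinarith
    exact le_of_mul_le_mul_right h3 hSpos
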